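/- arXiv:2001.00625 — 4 statements merged into one kernel-verified Lean document; each statement's English description precedes it below -/
import Mathlib

section
/- Let n ≥ 2. The monoid presented by generators m_{i,j} for 1 ≤ i < j ≤ n subject to the relations (P1) m_{i,j}·m_{i,j} = m_{i,j} for all i < j; (P2) m_{i,j}·m_{r,s} = m_{r,s}·m_{i,j} for all i < j and r < s; (P3) m_{i,j}·m_{j,k} = m_{i,j}·m_{i,k} = m_{j,k}·m_{i,k} for all i < j < k, is isomorphic as a monoid to the set-partition monoid P_n, via an isomorphism sending the generator m_{i,j} to the partition μ_{i,j} whose only non-singleton block is {i, j}. -/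
/-- The commutative idempotent monoid of set partitions of `α`, realized as `Setoid α`
with multiplication the lattice join and identity the discrete partition `⊥`. -/
instance setoidCommMonoid (α : Type*) : CommMonoid (Setoid α) where
  mul := (· ⊔ ·)
  one := ⊥
  mul_assoc := sup_assoc
  one_mul := bot_sup_eq
  mul_one := sup_bot_eq
  mul_comm := sup_comm

/-- `muSet X` is the partition of `α` whose only (possibly) non-singleton block is `X`:
the setoid generated by relating all elements of `X`. -/
def muSet {α : Type*} (X : Set α) : Setoid α :=
  Relation.EqvGen.setoid (fun x y => x ∈ X ∧ y ∈ X)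

/-- `mu i j` is the partition whose only non-singleton block is `{i, j}`. -/
def mu {α : Type*} (i j : α) : Setoid α := muSet {i, j}

/-- Generators `m_{i,j}` for `i < j` in `Fin n`. -/
abbrev PGen (n : ℕ) := {p : Fin n × Fin n // p.1 < p.2}

open FreeMonoid in
/-- The defining relations (P1), (P2), (P3) of the monoid of set partitions of type A. -/
inductive PRel (n : ℕ) : FreeMonoid (PGen n) → FreeMonoid (PGen n) → Prop
  /-- (P1) `m_{i,j} m_{i,j} = m_{i,j}`. -/
  | P1 (a : PGen n) : PRel n (of a * of a) (of a)
  /-- (P2) `m_{i,j} m_{r,s} = m_{r,s} m_{i,j}`. -/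
  | P2 (a b : PGen n) : PRel n (of a * of b) (of b * of a)
  /-- (P3), first equality: `m_{i,j} m_{j,k} = m_{i,j} m_{i,k}` for `i < j < k`. -/
  | P3a (i j k : Fin n) (hij : i < j) (hjk : j < k) :
      PRel n (of ⟨(i, j), hij⟩ * of ⟨(j, k), hjk⟩)
        (of ⟨(i, j), hij⟩ * of ⟨(i, k), hij.trans hjk⟩)
  /-- (P3), second equality: `m_{i,j} m_{j,k} = m_{j,k} m_{i,k}` for `i < j < k`. -/
  | P3b (i j k : Fin n) (hij : i < j) (hjk : j < k) :
      PRel n (of ⟨(i, j), hij⟩ * of ⟨(j, k), hjk⟩)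
        (of ⟨(j, k), hjk⟩ * of ⟨(i, k), hij.trans hjk⟩)

section Aux

open Relation

variable {α : Type*}

lemma setoid_mul_def (s t : Setoid α) : s * t = s ⊔ t := rfl
lemma setoid_one_def : (1 : Setoid α) = ⊥ := rfl

lemma mu_apply_self {i j : α} : mu i j i j :=
  Relation.EqvGen.rel _ _ ⟨by simp, by simp⟩

lemma mu_comm (i j : α) : mu i j = mu j i := by
  unfold mu muSet
  rw [Set.pair_comm]

lemma mu_le_iff {i j : α} {s : Setoid α} : mu i j ≤ s ↔ s i j := by
  constructor
  · intro h
    exact Setoid.le_def.mp h mu_apply_self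
  · intro h
    apply Setoid.eqvGen_le
    rintro x y ⟨hx, hy⟩
    simp only [Set.mem_insert_iff, Set.mem_singleton_iff] at hx hy
    rcases hx with rfl | rfl <;> rcases hy with rfl | rfl
    · exact s.refl _
    · exact h
    · exact s.symm h
    · exact s.refl _

lemma mu_rel_iff {i j a b : α} :
    mu i j a b ↔ a = b ∨ ((a = i ∨ a = j) ∧ (b = i ∨ b = j)) := by
  constructor
  · intro h
    induction h with
    | rel x y h =>
      right
      obtain ⟨hx, hy⟩ := h
      simp only [Set.mem_insert_iff, Set.mem_singleton_iff] at hx hy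
      exact ⟨hx, hy⟩
    | refl x => exact Or.inl rfl
    | symm x y _ ih => tauto
    | trans x y z _ _ ih1 ih2 => rcases ih1 with rfl | h1 <;> rcases ih2 with rfl | h2 <;> tauto
  · rintro (rfl | ⟨ha, hb⟩)
    · exact (mu i j).refl _
    · exact Relation.EqvGen.rel _ _ ⟨by rcases ha with rfl | rfl <;> simp,
        by rcases hb with rfl | rfl <;> simp⟩

end Aux

namespace FitzGerald

open Relation PresentedMonoid

variable {n : ℕ}

abbrev M (n : ℕ) := PresentedMonoid (PRel n)

abbrev e (a : PGen n) : M n := PresentedMonoid.of (PRel n) a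

lemma mk_eq {a b : FreeMonoid (PGen n)} (h : PRel n a b) :
    PresentedMonoid.mk (PRel n) a = PresentedMonoid.mk (PRel n) b :=
  (Con.eq _).mpr (ConGen.Rel.of _ _ h)

lemma e_idem (a : PGen n) : e a * e a = e a := by
  have := mk_eq (PRel.P1 a)
  rwa [map_mul] at this

lemma e_comm (a b : PGen n) : e a * e b = e b * e a := by
  have := mk_eq (PRel.P2 a b)
  rwa [map_mul, map_mul] at this

lemma e_comm_mul (a : PGen n) (x : M n) : e a * x = x * e a := by
  induction x using PresentedMonoid.inductionOn with
  | h w =>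
    induction w using FreeMonoid.recOn with
    | one => simp
    | of_mul b v ihv =>
      rw [map_mul]
      calc e a * (e b * mk (PRel n) v) = (e a * e b) * mk (PRel n) v := by rw [mul_assoc]
        _ = (e b * e a) * mk (PRel n) v := by rw [e_comm]
        _ = e b * (e a * mk (PRel n) v) := by rw [mul_assoc]
        _ = e b * (mk (PRel n) v * e a) := by rw [ihv]
        _ = (e b * mk (PRel n) v) * e a := by rw [mul_assoc]

instance : CommMonoid (M n) :=
  { (inferInstance : Monoid (M n)) with
    mul_comm := by
      intro x y
      induction x using PresentedMonoid.inductionOn with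
      | h w =>
        induction w using FreeMonoid.recOn with
        | one => simp
        | of_mul a v ihv =>
          rw [map_mul]
          show e a * mk (PRel n) v * y = y * (e a * mk (PRel n) v)
          calc e a * mk (PRel n) v * y
              = e a * (mk (PRel n) v * y) := by rw [mul_assoc]
            _ = e a * (y * mk (PRel n) v) := by rw [ihv]
            _ = (e a * y) * mk (PRel n) v := by rw [mul_assoc]
            _ = (y * e a) * mk (PRel n) v := by rw [e_comm_mul]
            _ = y * (e a * mk (PRel n) v) := by rw [mul_assoc] }

lemma tri3a (i j k : Fin n) (hij : i < j) (hjk : j < k) :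
    e ⟨(i, j), hij⟩ * e ⟨(j, k), hjk⟩ = e ⟨(i, j), hij⟩ * e ⟨(i, k), hij.trans hjk⟩ := by
  have := mk_eq (PRel.P3a i j k hij hjk)
  rwa [map_mul, map_mul] at this

lemma tri3b (i j k : Fin n) (hij : i < j) (hjk : j < k) :
    e ⟨(i, j), hij⟩ * e ⟨(j, k), hjk⟩ = e ⟨(j, k), hjk⟩ * e ⟨(i, k), hij.trans hjk⟩ := by
  have := mk_eq (PRel.P3b i j k hij hjk)
  rwa [map_mul, map_mul] at this

/-- All products of two distinct elements among the three generators of a triangle agree,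
and equal the product of all three. -/
lemma triangle_core (i j k : Fin n) (hij : i < j) (hjk : j < k) :
    let x := e ⟨(i, j), hij⟩; let y := e ⟨(j, k), hjk⟩; let z := e ⟨(i, k), hij.trans hjk⟩
    x * y = x * z ∧ x * y = y * z ∧ x * y * z = x * y := by
  intro x y z
  refine ⟨tri3a i j k hij hjk, tri3b i j k hij hjk, ?_⟩
  calc x * y * z = (y * z) * z := by rw [tri3b i j k hij hjk]
    _ = y * (z * z) := by rw [mul_assoc]
    _ = y * z := by rw [e_idem]
    _ = x * y := (tri3b i j k hij hjk).symm

/-- `g a b` is the generator for the (sorted) pair `{a, b}`, or `1` if `a = b`. -/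
def g (a b : Fin n) : M n :=
  if h : a < b then e ⟨(a, b), h⟩ else if h' : b < a then e ⟨(b, a), h'⟩ else 1

lemma g_self (a : Fin n) : g a a = 1 := by simp [g]

lemma g_symm (a b : Fin n) : g a b = g b a := by
  rcases lt_trichotomy a b with h | rfl | h
  · rw [g, g, dif_pos h, dif_neg (asymm h), dif_pos h]
  · rfl
  · rw [g, g, dif_pos h, dif_neg (asymm h), dif_pos h]

lemma g_lt (a b : Fin n) (h : a < b) : g a b = e ⟨(a, b), h⟩ := by rw [g, dif_pos h]

lemma g_idem (a b : Fin n) : g a b * g a b = g a b := by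
  rcases lt_trichotomy a b with h | rfl | h
  · rw [g_lt a b h]; exact e_idem _
  · rw [g_self]; simp
  · rw [g_symm, g_lt b a h]; exact e_idem _

/-- The key triangle absorption identity for the symmetrized generators. -/
lemma g_triangle (a b c : Fin n) : g a b * g b c * g a c = g a b * g b c := by
  -- dispatch degenerate cases
  rcases eq_or_ne a b with rfl | hab
  · rw [g_self, one_mul, g_idem]
  rcases eq_or_ne b c with rfl | hbc
  · rw [g_self, mul_one, g_idem]
  rcases eq_or_ne a c with rfl | hac
  · rw [g_self, mul_one]
  rcases lt_trichotomy a b with h1 | h1 | h1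
  · rcases lt_trichotomy b c with h2 | h2 | h2
    · -- a < b < c
      obtain ⟨_, _, h3⟩ := triangle_core a b c h1 h2
      rw [g_lt a b h1, g_lt b c h2, g_lt a c (h1.trans h2)]
      exact h3
    · exact absurd h2 hbc
    · rcases lt_trichotomy a c with h4 | h4 | h4
      · -- a < c < b : triangle on (a, c, b)
        obtain ⟨e1, e2, e3⟩ := triangle_core a c b h4 h2
        rw [g_lt a b h1, g_lt a c h4, g_symm b c, g_lt c b h2]
        set x := e ⟨(a, c), h4⟩
        set y := e ⟨(c, b), h2⟩
        set z := e ⟨(a, b), h4.trans h2⟩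
        calc z * y * x = x * y * z := by ac_rfl
          _ = x * y := e3
          _ = y * z := e2
          _ = z * y := by ac_rfl
      · exact absurd h4 hac
      · -- c < a < b : triangle on (c, a, b)
        obtain ⟨e1, e2, e3⟩ := triangle_core c a b h4 h1
        rw [g_symm b c, g_lt c b (h4.trans h1), g_symm a c, g_lt c a h4, g_lt a b h1]
        set x := e ⟨(c, a), h4⟩
        set y := e ⟨(a, b), h1⟩
        set z := e ⟨(c, b), h4.trans h1⟩
        calc y * z * x = x * y * z := by ac_rfl
          _ = x * y := e3
          _ = y * z := e2
  · exact absurd h1 hab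
  · rcases lt_trichotomy b c with h2 | h2 | h2
    · rcases lt_trichotomy a c with h4 | h4 | h4
      · -- b < a < c : triangle on (b, a, c)
        obtain ⟨e1, e2, e3⟩ := triangle_core b a c h1 h4
        rw [g_symm a b, g_lt b a h1, g_lt b c h2, g_lt a c h4]
        set x := e ⟨(b, a), h1⟩
        set y := e ⟨(a, c), h4⟩
        set z := e ⟨(b, c), h2⟩
        calc x * z * y = x * y * z := by ac_rfl
          _ = x * y := e3
          _ = x * z := e1
      · exact absurd h4 hac
      · -- b < c < a : triangle on (b, c, a)
        obtain ⟨e1, e2, e3⟩ := triangle_core b c a h2 h4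
        rw [g_symm a b, g_lt b a (h2.trans h4), g_lt b c h2, g_symm a c, g_lt c a h4]
        set x := e ⟨(b, c), h2⟩
        set y := e ⟨(c, a), h4⟩
        set z := e ⟨(b, a), h2.trans h4⟩
        calc z * x * y = x * y * z := by ac_rfl
          _ = x * y := e3
          _ = x * z := e1
          _ = z * x := by ac_rfl
    · exact absurd h2 hbc
    · -- c < b < a : triangle on (c, b, a)
      obtain ⟨e1, e2, e3⟩ := triangle_core c b a h2 h1
      rw [g_symm a b, g_lt b a h1, g_symm b c, g_lt c b h2, g_symm a c, g_lt c a (h2.trans h1)]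
      set x := e ⟨(c, b), h2⟩
      set y := e ⟨(b, a), h1⟩
      set z := e ⟨(c, a), h2.trans h1⟩
      calc y * x * z = x * y * z := by ac_rfl
        _ = x * y := e3
        _ = y * x := by ac_rfl

end FitzGerald

namespace FitzGerald

open Relation PresentedMonoid

variable {n : ℕ}

/-- Interpretation of the generators in the partition monoid. -/
def f (n : ℕ) : PGen n → Setoid (Fin n) := fun p => mu p.1.1 p.1.2

lemma rel_of_le {α : Type*} {s t : Setoid α} (h : s ≤ t) {a b : α} (hab : s a b) : t a b :=
  Setoid.le_def.mp h hab

lemma mu_sup_triangle1 {α : Type*} (i j k : α) : mu i j ⊔ mu j k = mu i j ⊔ mu i k := by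
  apply le_antisymm
  · refine sup_le le_sup_left (mu_le_iff.mpr ?_)
    have h1 : (mu i j ⊔ mu i k) i j := rel_of_le le_sup_left mu_apply_self
    have h2 : (mu i j ⊔ mu i k) i k := rel_of_le le_sup_right mu_apply_self
    exact Setoid.trans' _ (Setoid.symm' _ h1) h2
  · refine sup_le le_sup_left (mu_le_iff.mpr ?_)
    have h1 : (mu i j ⊔ mu j k) i j := rel_of_le le_sup_left mu_apply_self
    have h2 : (mu i j ⊔ mu j k) j k := rel_of_le le_sup_right mu_apply_self
    exact Setoid.trans' _ h1 h2

lemma mu_sup_triangle2 {α : Type*} (i j k : α) : mu i j ⊔ mu j k = mu j k ⊔ mu i k := by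
  apply le_antisymm
  · refine sup_le (mu_le_iff.mpr ?_) le_sup_left
    have h1 : (mu j k ⊔ mu i k) j k := rel_of_le le_sup_left mu_apply_self
    have h2 : (mu j k ⊔ mu i k) i k := rel_of_le le_sup_right mu_apply_self
    exact Setoid.trans' _ h2 (Setoid.symm' _ h1)
  · refine sup_le le_sup_right (mu_le_iff.mpr ?_)
    have h1 : (mu i j ⊔ mu j k) i j := rel_of_le le_sup_left mu_apply_self
    have h2 : (mu i j ⊔ mu j k) j k := rel_of_le le_sup_right mu_apply_self
    exact Setoid.trans' _ h1 h2

lemma f_resp (n : ℕ) : ∀ a b : FreeMonoid (PGen n), PRel n a b →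
    FreeMonoid.lift (f n) a = FreeMonoid.lift (f n) b := by
  intro a b h
  induction h with
  | P1 a =>
    rw [map_mul, FreeMonoid.lift_eval_of, setoid_mul_def, sup_idem]
  | P2 a b =>
    rw [map_mul, map_mul, setoid_mul_def, setoid_mul_def, sup_comm]
  | P3a i j k hij hjk =>
    rw [map_mul, map_mul, FreeMonoid.lift_eval_of, FreeMonoid.lift_eval_of,
      FreeMonoid.lift_eval_of, setoid_mul_def, setoid_mul_def]
    exact mu_sup_triangle1 i j k
  | P3b i j k hij hjk =>
    rw [map_mul, map_mul, FreeMonoid.lift_eval_of, FreeMonoid.lift_eval_of,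
      FreeMonoid.lift_eval_of, setoid_mul_def, setoid_mul_def]
    exact mu_sup_triangle2 i j k

/-- The canonical homomorphism from the presented monoid to the partition monoid. -/
def phi (n : ℕ) : M n →* Setoid (Fin n) := PresentedMonoid.lift (f n) (f_resp n)

lemma phi_of (p : PGen n) : phi n (e p) = mu p.1.1 p.1.2 := rfl

lemma phi_mk_cons (p : PGen n) (v : FreeMonoid (PGen n)) :
    phi n (mk (PRel n) (FreeMonoid.of p * v)) =
      mu p.1.1 p.1.2 ⊔ phi n (mk (PRel n) v) := by
  rw [map_mul, map_mul]
  rw [setoid_mul_def]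
  congr 1

/-- The key absorption lemma: if `a ~ b` in the partition `phi x`, then `x` absorbs the
generator `g a b`. -/
lemma absorb : ∀ (x : M n) (a b : Fin n), phi n x a b → x * g a b = x := by
  intro x
  induction x using PresentedMonoid.inductionOn with
  | h w =>
    induction w using FreeMonoid.recOn with
    | one =>
      intro a b hab
      have h1 : phi n (mk (PRel n) 1) = ⊥ := by rw [map_one, map_one, setoid_one_def]
      rw [h1] at hab
      have : a = b := hab
      subst this
      rw [g_self, mul_one]
    | of_mul p v ihv =>
      intro a b hab
      rw [phi_mk_cons, Setoid.sup_eq_eqvGen] at hab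
      have hab' : EqvGen (fun x y => mu p.1.1 p.1.2 x y ∨ phi n (mk (PRel n) v) x y) a b := hab
      clear hab
      rw [map_mul]
      show mk (PRel n) (FreeMonoid.of p) * mk (PRel n) v * g a b =
        mk (PRel n) (FreeMonoid.of p) * mk (PRel n) v
      induction hab' with
      | rel x y h =>
        rcases h with h | h
        · rcases mu_rel_iff.mp h with rfl | ⟨hx, hy⟩
          · rw [g_self, mul_one]
          · have key : mk (PRel n) (FreeMonoid.of p) * mk (PRel n) v * e p =
                mk (PRel n) (FreeMonoid.of p) * mk (PRel n) v := by
              show e p * mk (PRel n) v * e p = e p * mk (PRel n) v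
              calc e p * mk (PRel n) v * e p = (e p * e p) * mk (PRel n) v := by ac_rfl
                _ = e p * mk (PRel n) v := by rw [e_idem]
            rcases hx with rfl | rfl <;> rcases hy with rfl | rfl
            · rw [g_self, mul_one]
            · rw [g_lt _ _ p.2]; exact key
            · rw [g_symm, g_lt _ _ p.2]; exact key
            · rw [g_self, mul_one]
        · have h2 := ihv x y h
          calc mk (PRel n) (FreeMonoid.of p) * mk (PRel n) v * g x y
              = mk (PRel n) (FreeMonoid.of p) * (mk (PRel n) v * g x y) := by rw [mul_assoc]
            _ = mk (PRel n) (FreeMonoid.of p) * mk (PRel n) v := by rw [h2]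
      | refl x => rw [g_self, mul_one]
      | symm x y h ih => rw [g_symm]; exact ih
      | trans x y z h1 h2 ih1 ih2 =>
        set X := mk (PRel n) (FreeMonoid.of p) * mk (PRel n) v with hX
        calc X * g x z = (X * g y z) * g x z := by rw [ih2]
          _ = ((X * g x y) * g y z) * g x z := by rw [ih1]
          _ = X * (g x y * g y z * g x z) := by ac_rfl
          _ = X * (g x y * g y z) := by rw [g_triangle]
          _ = (X * g x y) * g y z := (mul_assoc X (g x y) (g y z)).symm
          _ = X * g y z := by rw [ih1]
          _ = X := ih2

lemma absorb_word (x : M n) (hx : ∀ a b : Fin n, phi n x a b → x * g a b = x) :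
    ∀ v : FreeMonoid (PGen n), phi n (mk (PRel n) v) ≤ phi n x →
      x * mk (PRel n) v = x := by
  intro v
  induction v using FreeMonoid.recOn with
  | one => intro _; rw [map_one, mul_one]
  | of_mul p v ihv =>
    intro hle
    rw [phi_mk_cons] at hle
    have h1 : mu p.1.1 p.1.2 ≤ phi n x := le_trans le_sup_left hle
    have h2 : phi n (mk (PRel n) v) ≤ phi n x := le_trans le_sup_right hle
    have e1 : x * e p = x := by
      have := hx p.1.1 p.1.2 (rel_of_le h1 mu_apply_self)
      rwa [g_lt _ _ p.2] at this
    rw [map_mul]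
    show x * (e p * mk (PRel n) v) = x
    rw [← mul_assoc, e1, ihv h2]

lemma phi_inj : Function.Injective (phi n) := by
  intro x y h
  obtain ⟨u, rfl⟩ := PresentedMonoid.surjective_mk (rels := PRel n) x
  obtain ⟨v, rfl⟩ := PresentedMonoid.surjective_mk (rels := PRel n) y
  have h1 : mk (PRel n) u * mk (PRel n) v = mk (PRel n) u :=
    absorb_word _ (absorb _) v (le_of_eq h.symm)
  have h2 : mk (PRel n) v * mk (PRel n) u = mk (PRel n) v :=
    absorb_word _ (absorb _) u (le_of_eq h)
  rw [← h1, mul_comm, h2]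

instance setoidOrderedCommMonoid (α : Type*) : IsOrderedMonoid (Setoid α) :=
  { mul_le_mul_left := fun a b h c => sup_le_sup_right h c }

lemma phi_surj : Function.Surjective (phi n) := by
  classical
  intro s
  set F : Finset (PGen n) := Finset.univ.filter (fun p => s p.1.1 p.1.2) with hF
  refine ⟨∏ p ∈ F, e p, ?_⟩
  rw [map_prod]
  apply le_antisymm
  · apply Finset.prod_induction (fun p => phi n (e p)) (fun t => t ≤ s)
    · intro a b ha hb
      rw [setoid_mul_def]
      exact sup_le ha hb
    · rw [setoid_one_def]; exact bot_le
    · intro p hp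
      rw [phi_of]
      exact mu_le_iff.mpr ((Finset.mem_filter.mp hp).2)
  · refine Setoid.le_def.mpr ?_
    intro a b hab
    rcases eq_or_ne a b with rfl | hne
    · exact Setoid.refl' _ _
    have hone : ∀ q ∈ F, (1 : Setoid (Fin n)) ≤ phi n (e q) := by
      intro q _
      rw [setoid_one_def]
      exact bot_le
    rcases hne.lt_or_gt with hlt | hlt
    · have hp : (⟨(a, b), hlt⟩ : PGen n) ∈ F := by
        rw [hF, Finset.mem_filter]
        exact ⟨Finset.mem_univ _, hab⟩
      have hle : mu a b ≤ ∏ p ∈ F, phi n (e p) := by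
        have := Finset.single_le_prod' hone hp
        rwa [phi_of] at this
      exact rel_of_le hle mu_apply_self
    · have hp : (⟨(b, a), hlt⟩ : PGen n) ∈ F := by
        rw [hF, Finset.mem_filter]
        exact ⟨Finset.mem_univ _, s.symm hab⟩
      have hle : mu b a ≤ ∏ p ∈ F, phi n (e p) := by
        have := Finset.single_le_prod' hone hp
        rwa [phi_of] at this
      exact Setoid.symm' _ (rel_of_le hle mu_apply_self)

end FitzGerald

/-- FitzGerald.  The monoid presented by the generators `m_{i,j}` (for
`i < j` in `Fin n`) subject to relations (P1)–(P3) is isomorphic to the set-partition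
monoid `P_n = Setoid (Fin n)`, via an isomorphism sending `m_{i,j}` to `μ_{i,j}`. -/
theorem presentedMonoid_isomorphic_partition_monoid (n : ℕ) (hn : 2 ≤ n) :
    ∃ φ : PresentedMonoid (PRel n) ≃* Setoid (Fin n),
      ∀ a : PGen n, φ (PresentedMonoid.of (PRel n) a) = mu a.1.1 a.1.2 := by
  refine ⟨MulEquiv.ofBijective (FitzGerald.phi n)
    ⟨FitzGerald.phi_inj, FitzGerald.phi_surj⟩, ?_⟩
  intro a
  exact FitzGerald.phi_of a
end

section
/- Let n ≥ 2 and let r_1, …, r_k ∈ {1,…,n} (k ≥ 2) be pairwise distinct. In the partition monoid P_n, writing C := μ_{r_1,r_2} ⊔ ⋯ ⊔ μ_{r_{k−1},r_k}, the following identities hold for i < j in {1,…,n}: (1) if i = r_1 and j = r_k then C ⊔ μ_{i,j} = C; (2) if i < r_1 and j = r_k then C ⊔ μ_{i,j} = μ_{i,r_1} ⊔ C; (3) if i = r_1 and j > r_k then C ⊔ μ_{i,j} = C ⊔ μ_{r_k,j}; (4) if r_1 < i < r_2 and j = r_k then C ⊔ μ_{i,j} = μ_{r_1,i} ⊔ μ_{i,r_2}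 ⊔ μ_{r_2,r_3} ⊔ ⋯ ⊔ μ_{r_{k−1},r_k}; (5) if i = r_1 and r_{k−1} < j < r_k then C ⊔ μ_{i,j} = μ_{r_1,r_2} ⊔ ⋯ ⊔ μ_{r_{k−2},r_{k−1}} ⊔ μ_{r_{k−1},j} ⊔ μ_{j,r_k}. -/
/-- `chainJoin [r₁, …, r_k] = μ_{r₁,r₂} ⊔ μ_{r₂,r₃} ⊔ ⋯ ⊔ μ_{r_{k-1},r_k}` (and `⊥` if
the list has fewer than two entries). -/
def chainJoin {α : Type*} : List α → Setoid α
  | [] => ⊥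
  | [_] => ⊥
  | a :: b :: l => mu a b ⊔ chainJoin (b :: l)

theorem muSet_rel {α : Type*} {X : Set α} {x y : α} (hx : x ∈ X) (hy : y ∈ X) :
    muSet X x y :=
  Relation.EqvGen.rel _ _ ⟨hx, hy⟩

theorem muSet_mono {α : Type*} {X Y : Set α} (h : X ⊆ Y) : muSet X ≤ muSet Y :=
  Setoid.eqvGen_mono fun _ _ hr => ⟨h hr.1, h hr.2⟩

theorem muSet_union {α : Type*} {X Y : Set α} (h : (X ∩ Y).Nonempty) :
    muSet (X ∪ Y) = muSet X ⊔ muSet Y := by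
  obtain ⟨z, hzX, hzY⟩ := h
  refine le_antisymm (Setoid.eqvGen_le fun x y hxy => ?_)
    (sup_le (muSet_mono Set.subset_union_left) (muSet_mono Set.subset_union_right))
  have hz : ∀ w, w ∈ X ∪ Y → (muSet X ⊔ muSet Y) w z := by
    rintro w (hw | hw)
    · exact le_sup_left (α := Setoid α) (muSet_rel hw hzX)
    · exact le_sup_right (α := Setoid α) (muSet_rel hw hzY)
  exact (muSet X ⊔ muSet Y).trans (hz x hxy.1) ((muSet X ⊔ muSet Y).symm (hz y hxy.2))

theorem chainJoin_eq {α : Type*} : ∀ (l : List α), 2 ≤ l.length →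
    chainJoin l = muSet {x | x ∈ l}
  | a :: b :: t, _ => by
    cases t with
    | nil =>
      show mu a b ⊔ ⊥ = _
      rw [sup_bot_eq, mu]
      congr 1
      ext x; simp
    | cons c t =>
      show mu a b ⊔ chainJoin (b :: c :: t) = _
      rw [chainJoin_eq (b :: c :: t) (by simp), mu,
        ← muSet_union ⟨b, by simp, by simp⟩]
      congr 1
      ext x
      simp only [Set.mem_union, Set.mem_insert_iff, Set.mem_singleton_iff,
        Set.mem_setOf_eq, List.mem_cons]
      tauto

/-- Corollary of (P3).  Let `r₁, …, r_k` (`k ≥ 2`) be pairwise distinct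
elements of `Fin n`, encoded as a list `l` with no duplicates, and let
`C = μ_{r₁,r₂} ⊔ ⋯ ⊔ μ_{r_{k-1},r_k} = chainJoin l`.  Then for `i < j`:
(1) if `i = r₁`, `j = r_k` then `C ⊔ μ_{i,j} = C`;
(2) if `i < r₁`, `j = r_k` then `C ⊔ μ_{i,j} = μ_{i,r₁} ⊔ C`;
(3) if `i = r₁`, `j > r_k` then `C ⊔ μ_{i,j} = C ⊔ μ_{r_k,j}`;
(4) if `r₁ < i < r₂`, `j = r_k` then `C ⊔ μ_{i,j} = μ_{r₁,i} ⊔ μ_{i,r₂} ⊔ μ_{r₂,r₃} ⊔ ⋯`;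
(5) if `i = r₁`, `r_{k-1} < j < r_k` then `C ⊔ μ_{i,j} = μ_{r₁,r₂} ⊔ ⋯ ⊔ μ_{r_{k-1},j} ⊔ μ_{j,r_k}`. -/
theorem chainJoin_sup_mu (n : ℕ) (hn : 2 ≤ n) (l : List (Fin n))
    (hlen : 2 ≤ l.length) (hnd : l.Nodup) (i j : Fin n) (hij : i < j) :
    -- (1) i = r₁ and j = r_k
    (∀ mid : List (Fin n), l = i :: (mid ++ [j]) →
        chainJoin l ⊔ mu i j = chainJoin l) ∧
    -- (2) i < r₁ and j = r_k
    (∀ (r₁ : Fin n) (mid : List (Fin n)), l = r₁ :: (mid ++ [j]) → i < r₁ →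
        chainJoin l ⊔ mu i j = mu i r₁ ⊔ chainJoin l) ∧
    -- (3) i = r₁ and j > r_k
    (∀ (rk : Fin n) (mid : List (Fin n)), l = i :: (mid ++ [rk]) → rk < j →
        chainJoin l ⊔ mu i j = chainJoin l ⊔ mu rk j) ∧
    -- (4) r₁ < i < r₂ and j = r_k
    (∀ (r₁ : Fin n) (back : List (Fin n)) (hb : back ≠ []), l = r₁ :: back →
        back.getLast hb = j → r₁ < i → i < back.head hb →
        chainJoin l ⊔ mu i j = chainJoin (r₁ :: i :: back)) ∧
    -- (5) i = r₁ and r_{k-1} < j < r_k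
    (∀ (front : List (Fin n)) (rk : Fin n) (hf : front ≠ []), l = front ++ [rk] →
        front.head hf = i → front.getLast hf < j → j < rk →
        chainJoin l ⊔ mu i j = chainJoin (front ++ [j, rk])) := by
  refine ⟨?_, ?_, ?_, ?_, ?_⟩
  · -- (1)
    rintro mid rfl
    rw [chainJoin_eq _ hlen, mu, ← muSet_union ⟨i, by simp, by simp⟩]
    congr 1
    ext x
    simp only [Set.mem_union, Set.mem_setOf_eq, List.mem_cons, List.mem_append,
      List.mem_singleton, Set.mem_insert_iff, Set.mem_singleton_iff]
    tauto
  · -- (2)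
    rintro r₁ mid rfl hir
    rw [chainJoin_eq _ hlen, mu, mu,
      ← muSet_union ⟨j, by simp, by simp⟩, ← muSet_union ⟨r₁, by simp, by simp⟩]
    congr 1
    ext x
    simp only [Set.mem_union, Set.mem_setOf_eq, List.mem_cons, List.mem_append,
      List.mem_singleton, Set.mem_insert_iff, Set.mem_singleton_iff]
    tauto
  · -- (3)
    rintro rk mid rfl hrj
    rw [chainJoin_eq _ hlen, mu, mu,
      ← muSet_union ⟨i, by simp, by simp⟩, ← muSet_union ⟨rk, by simp, by simp⟩]
    congr 1
    ext x
    simp only [Set.mem_union, Set.mem_setOf_eq, List.mem_cons, List.mem_append,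
      List.mem_singleton, Set.mem_insert_iff, Set.mem_singleton_iff]
    tauto
  · -- (4)
    rintro r₁ back hb rfl hlast hri hib
    have hj : j ∈ back := hlast ▸ List.getLast_mem hb
    have h2 : 2 ≤ (r₁ :: i :: back).length := by simp
    rw [chainJoin_eq _ hlen, mu, ← muSet_union ⟨j, by simp [hj], by simp⟩,
      chainJoin_eq _ h2]
    congr 1
    ext x
    simp only [Set.mem_union, Set.mem_setOf_eq, List.mem_cons, Set.mem_insert_iff,
      Set.mem_singleton_iff]
    constructor
    · rintro ((h | h) | (rfl | rfl)) <;> tauto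
    · rintro (h | h | h) <;> tauto
  · -- (5)
    rintro front rk hf rfl hhead hlj hjr
    have hi : i ∈ front := hhead ▸ List.head_mem hf
    have h2 : 2 ≤ (front ++ [j, rk]).length := by
      have := List.length_pos_iff.mpr hf
      simp only [List.length_append, List.length_cons, List.length_singleton]
      omega
    rw [chainJoin_eq _ hlen, mu,
      ← muSet_union ⟨i, by simp [hi], by simp⟩, chainJoin_eq _ h2]
    congr 1
    ext x
    simp only [Set.mem_union, Set.mem_setOf_eq, List.mem_append, List.mem_cons,
      List.mem_singleton, Set.mem_insert_iff, Set.mem_singleton_iff,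
      List.not_mem_nil, or_false]
    constructor
    · rintro ((h | h) | (rfl | rfl)) <;> tauto
    · rintro (h | h | h) <;> tauto
end

section
/- Let n ≥ 2. The map s on the partition monoid of [±n] defined by s(I) = I ⊔ I⁻, where I⁻ is the image of I under the negation involution, is a monoid homomorphism whose range is exactly the set SP_n of signed partitions, and its kernel congruence {(I, J) : s(I) = s(J)} equals the congruence generated by the set Q of pairs (μ_{i,j}, μ_{−j,−i}) for i < j in [±n]. -/
/-- `[±n]`: nonzero integers of absolute value at most `n`, with the order from `ℤ`. -/
abbrev PM (n : ℕ) := {k : ℤ // k ≠ 0 ∧ |k| ≤ (n : ℤ)}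

namespace PM

/-- The negation involution `k ↦ -k` on `[±n]`. -/
def neg {n : ℕ} (x : PM n) : PM n :=
  ⟨-x.1, by obtain ⟨h1, h2⟩ := x.2; exact ⟨neg_ne_zero.mpr h1, by rwa [abs_neg]⟩⟩

@[simp] theorem neg_neg {n : ℕ} (x : PM n) : x.neg.neg = x := Subtype.ext (by simp [neg])

theorem neg_lt_neg {n : ℕ} {x y : PM n} (h : x < y) : y.neg < x.neg := by
  have h' : x.1 < y.1 := Subtype.coe_lt_coe.mpr h
  rw [← Subtype.coe_lt_coe]
  show -y.1 < -x.1
  omega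

theorem neg_lt_pos {n : ℕ} {x y : PM n} (hx : 0 < x.1) (hy : 0 < y.1) : x.neg < y := by
  rw [← Subtype.coe_lt_coe]
  show -x.1 < y.1
  omega

theorem pos_ne_neg {n : ℕ} {x y : PM n} (hx : 0 < x.1) (hy : 0 < y.1) : y ≠ x.neg := by
  intro h
  have : y.1 = -x.1 := congrArg Subtype.val h
  omega

theorem neg_lt_self {n : ℕ} {x : PM n} (hx : 0 < x.1) : x.neg < x := neg_lt_pos hx hx

/-- The absolute value map `x ↦ |x|` from `[±n]` to its positive part. -/
def abs {n : ℕ} (x : PM n) : PM n :=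
  ⟨|x.1|, by obtain ⟨h1, h2⟩ := x.2; exact ⟨abs_ne_zero.mpr h1, by rwa [abs_abs]⟩⟩

end PM

/-- Image of a subset of `[±n]` under negation. -/
def negSet {n : ℕ} (K : Set (PM n)) : Set (PM n) := PM.neg '' K

/-- The partition `I⁻` transported along negation: `x ∼ y` in `negPart I` iff `-x ∼ -y` in `I`. -/
def negPart {n : ℕ} (I : Setoid (PM n)) : Setoid (PM n) := Setoid.comap PM.neg I

/-- A set partition `I` of `[±n]` is *signed* if for every block `K` of `I` the set `-K` is
also a block; equivalently, `x ∼ y ↔ -x ∼ -y` for all `x, y`. -/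
def IsSigned {n : ℕ} (I : Setoid (PM n)) : Prop :=
  ∀ x y : PM n, I x y ↔ I (PM.neg x) (PM.neg y)

/-- A *zero block* of a partition `I` is a block `K` with `-K = K`. -/
def IsZeroBlock {n : ℕ} (I : Setoid (PM n)) (K : Set (PM n)) : Prop :=
  K ∈ I.classes ∧ negSet K = K

/-- A `Bₙ`-partition: a signed partition of `[±n]` with at most one zero block. -/
def IsBPart {n : ℕ} (I : Setoid (PM n)) : Prop :=
  IsSigned I ∧ Set.Subsingleton {K | IsZeroBlock I K}

/-- A *restricted* signed partition: all its zero blocks have more than two elements. -/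
def IsRestricted {n : ℕ} (I : Setoid (PM n)) : Prop :=
  IsSigned I ∧ ∀ K : Set (PM n), IsZeroBlock I K → 2 < K.ncard

/-- A `Dₙ`-partition: a `Bₙ`-partition whose zero block (if present) has more than two
elements. -/
def IsDPart {n : ℕ} (I : Setoid (PM n)) : Prop :=
  IsBPart I ∧ ∀ K : Set (PM n), IsZeroBlock I K → 2 < K.ncard

/-- For `i < j` in `[±n]`, the signed partition `ε_{i,j} = μ_{-j,-i} ⊔ μ_{i,j}`. -/
def eps {n : ℕ} (i j : PM n) : Setoid (PM n) := mu (PM.neg j) (PM.neg i) ⊔ mu i j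

/-- The set `Q` of pairs `(μ_{i,j}, μ_{-j,-i})` for `i < j` in `[±n]`, viewed as a binary
relation on the partition monoid of `[±n]`. -/
def QRel (n : ℕ) : Setoid (PM n) → Setoid (PM n) → Prop := fun a b =>
  ∃ i j : PM n, i < j ∧ a = mu i j ∧ b = mu (PM.neg j) (PM.neg i)

-- auxiliary lemmas
section Lemmas
variable {n : ℕ}

theorem setoid_mul_def_s8 (I J : Setoid (PM n)) : I * J = I ⊔ J := rfl

theorem negPart_rel (I : Setoid (PM n)) (x y : PM n) :
    negPart I x y ↔ I x.neg y.neg := Iff.rfl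

theorem negPart_negPart (I : Setoid (PM n)) : negPart (negPart I) = I := by
  apply Setoid.ext; intro a b
  simp [negPart_rel]

theorem negPart_mono {I J : Setoid (PM n)} (h : I ≤ J) : negPart I ≤ negPart J := by
  rw [Setoid.le_def] at *
  intro x y hxy
  exact h hxy

theorem negPart_sup (I J : Setoid (PM n)) :
    negPart (I ⊔ J) = negPart I ⊔ negPart J := by
  have key : ∀ A B : Setoid (PM n), negPart A ⊔ negPart B ≤ negPart (A ⊔ B) := by
    intro A B
    exact sup_le (negPart_mono le_sup_left) (negPart_mono le_sup_right)
  apply le_antisymm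
  · have := key (negPart I) (negPart J)
    rw [negPart_negPart, negPart_negPart] at this
    have := negPart_mono this
    rwa [negPart_negPart] at this
  · exact key I J

theorem negPart_bot : negPart (⊥ : Setoid (PM n)) = ⊥ := by
  apply Setoid.ext; intro a b
  constructor
  · intro h
    have : a.neg = b.neg := h
    have := congrArg PM.neg this
    simpa using this
  · rintro rfl; exact (⊥ : Setoid (PM n)).refl _

theorem isSigned_iff {I : Setoid (PM n)} : IsSigned I ↔ negPart I = I := by
  constructor
  · intro h; apply Setoid.ext; intro a b
    rw [negPart_rel, ← h]
  · intro h x y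
    conv_rhs => rw [← h]
    rw [negPart_rel, PM.neg_neg, PM.neg_neg]

theorem mu_rel {α : Type*} (x y : α) : mu x y x y :=
  Relation.EqvGen.rel _ _ ⟨Set.mem_insert _ _, Set.mem_insert_iff.2 (Or.inr rfl)⟩

theorem mu_le {α : Type*} {I : Setoid α} {x y : α} (h : I x y) : mu x y ≤ I := by
  apply Setoid.eqvGen_le
  rintro a b ⟨ha, hb⟩
  rcases ha with rfl | ha <;> rcases hb with rfl | hb
  · exact I.refl _
  · rcases hb with rfl; exact h
  · rcases ha with rfl; exact I.symm h
  · rcases ha with rfl; rcases hb with rfl; exact I.refl _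

theorem mu_comm_s8 {α : Type*} (x y : α) : mu x y = mu y x := by
  unfold mu; rw [Set.pair_comm]

end Lemmas

section Main
variable {n : ℕ}

noncomputable instance PMFintype (n : ℕ) : Fintype (PM n) :=
  Set.Finite.fintype (s := {k : ℤ | k ≠ 0 ∧ |k| ≤ (n : ℤ)})
    ((Set.finite_Icc (-(n : ℤ)) n).subset fun k hk => Set.mem_Icc.mpr (abs_le.mp hk.2))

theorem negPart_mu (x y : PM n) : negPart (mu x y) = mu x.neg y.neg := by
  have key : ∀ a b : PM n, mu a.neg b.neg ≤ negPart (mu a b) := by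
    intro a b
    apply mu_le
    show mu a b a.neg.neg b.neg.neg
    rw [PM.neg_neg, PM.neg_neg]
    exact mu_rel a b
  apply le_antisymm
  · have := key x.neg y.neg
    rw [PM.neg_neg, PM.neg_neg] at this
    have := negPart_mono this
    rwa [negPart_negPart] at this
  · exact key x y

theorem conGen_step {J : Setoid (PM n)} {x y : PM n} (h : J x y) :
    conGen (QRel n) J (J ⊔ mu x.neg y.neg) := by
  rcases lt_trichotomy x y with hlt | rfl | hlt
  · have hgen : conGen (QRel n) (mu x y) (mu y.neg x.neg) :=
      ConGen.Rel.of _ _ ⟨x, y, hlt, rfl, rfl⟩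
    have h2 := (conGen (QRel n)).mul ((conGen (QRel n)).refl J) hgen
    rw [setoid_mul_def_s8, setoid_mul_def_s8, sup_eq_left.mpr (mu_le h), mu_comm_s8 y.neg x.neg] at h2
    exact h2
  · rw [sup_eq_left.mpr (mu_le (J.refl x.neg))]
    exact (conGen (QRel n)).refl J
  · have hgen : conGen (QRel n) (mu y x) (mu x.neg y.neg) :=
      ConGen.Rel.of _ _ ⟨y, x, hlt, rfl, rfl⟩
    have h2 := (conGen (QRel n)).mul ((conGen (QRel n)).refl J) hgen
    rw [setoid_mul_def_s8, setoid_mul_def_s8, sup_eq_left.mpr (mu_le (J.symm h))] at h2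
    exact h2

theorem conGen_sup_finset (I : Setoid (PM n)) (T : Finset (PM n × PM n))
    (hT : ∀ p ∈ T, I p.1 p.2) :
    conGen (QRel n) I (I ⊔ T.sup fun p => mu p.1.neg p.2.neg) := by
  classical
  induction T using Finset.induction_on with
  | empty => simpa using (conGen (QRel n)).refl I
  | @insert a T ha ih =>
    have h1 := ih fun p hp => hT p (Finset.mem_insert_of_mem hp)
    set S := T.sup fun p => mu p.1.neg p.2.neg with hS
    have hrel : (I ⊔ S) a.1 a.2 :=
      Setoid.le_def.mp le_sup_left (hT a (Finset.mem_insert_self a T))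
    have h2 := conGen_step hrel
    rw [Finset.sup_insert]
    have heq : (I ⊔ S) ⊔ mu a.1.neg a.2.neg = I ⊔ (mu a.1.neg a.2.neg ⊔ S) := by
      rw [sup_assoc, sup_comm S]
    rw [heq] at h2
    exact h1.trans h2

theorem negPart_eq_sup (I : Setoid (PM n)) [DecidablePred fun p : PM n × PM n => I p.1 p.2] :
    negPart I = (Finset.univ.filter fun p : PM n × PM n => I p.1 p.2).sup
      (fun p => mu p.1.neg p.2.neg) := by
  apply le_antisymm
  · rw [Setoid.le_def]
    intro a b hab
    have hab' : I a.neg b.neg := hab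
    have hmem : (a.neg, b.neg) ∈ Finset.univ.filter fun p : PM n × PM n => I p.1 p.2 := by
      simp [hab']
    have hle := Finset.le_sup (f := fun p : PM n × PM n => mu p.1.neg p.2.neg) hmem
    simp only [PM.neg_neg] at hle
    exact Setoid.le_def.mp hle (mu_rel a b)
  · apply Finset.sup_le
    intro p hp
    rw [Finset.mem_filter] at hp
    apply mu_le
    show negPart I p.1.neg p.2.neg
    rw [negPart_rel, PM.neg_neg, PM.neg_neg]
    exact hp.2

theorem conGen_signing (I : Setoid (PM n)) : conGen (QRel n) I (I ⊔ negPart I) := by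
  classical
  have := conGen_sup_finset I (Finset.univ.filter fun p : PM n × PM n => I p.1 p.2)
    (fun p hp => (Finset.mem_filter.mp hp).2)
  rwa [← negPart_eq_sup] at this

end Main

/-- The map `s(I) = I ⊔ I⁻` on the partition monoid of `[±n]` is a
monoid homomorphism whose range is exactly the set `SPₙ` of signed partitions, and whose
kernel congruence `{(I, J) : s(I) = s(J)}` equals the congruence generated by `Q`. -/
theorem signing_hom_range_and_ker (n : ℕ) (hn : 2 ≤ n) :
    ∃ s : Setoid (PM n) →* Setoid (PM n),
      (∀ I : Setoid (PM n), s I = I ⊔ negPart I) ∧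
      Set.range s = {I | IsSigned I} ∧
      Con.ker s = conGen (QRel n) := by
  classical
  refine ⟨{ toFun := fun I => I ⊔ negPart I
            map_one' := ?_
            map_mul' := ?_ }, fun I => rfl, ?_, ?_⟩
  · show (⊥ : Setoid (PM n)) ⊔ negPart ⊥ = ⊥
    rw [negPart_bot, sup_bot_eq]
  · intro I J
    show (I ⊔ J) ⊔ negPart (I ⊔ J) = (I ⊔ negPart I) ⊔ (J ⊔ negPart J)
    rw [negPart_sup, sup_sup_sup_comm]
  · ext I
    simp only [Set.mem_range, Set.mem_setOf_eq]
    constructor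
    · rintro ⟨J, rfl⟩
      show IsSigned (J ⊔ negPart J)
      rw [isSigned_iff, negPart_sup, negPart_negPart, sup_comm]
    · intro h
      exact ⟨I, by show I ⊔ negPart I = I; rw [isSigned_iff.mp h, sup_idem]⟩
  · apply le_antisymm
    · intro I J h
      have h' : I ⊔ negPart I = J ⊔ negPart J := h
      exact (conGen_signing I).trans (h' ▸ (conGen_signing J).symm)
    · apply Con.conGen_le.mpr
      rintro a b ⟨i, j, hij, rfl, rfl⟩
      show (mu i j ⊔ negPart (mu i j)) = (mu j.neg i.neg ⊔ negPart (mu j.neg i.neg))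
      rw [negPart_mu, negPart_mu, PM.neg_neg, PM.neg_neg, mu_comm_s8 j i,
        mu_comm_s8 j.neg i.neg, sup_comm]
end

section
/- Let n ≥ 2. For every signed partition L of [±n], the set {K ∈ P_n^B : L ≤ K} of B_n-partitions coarser than L has a least element (in the refinement order on partitions). Consequently, for all I, J ∈ P_n^B the set {K ∈ P_n^B : I ≤ K and J ≤ K} has a least element; this least element defines the product I ·_B J on P_n^B. -/
section Aux
variable {n : ℕ}

/-- Glue all zero blocks of a signed partition together. -/
def glueZero (L : Setoid (PM n)) (hL : IsSigned L) : Setoid (PM n) where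
  r x y := L x y ∨ (L x x.neg ∧ L y y.neg)
  iseqv := by
    constructor
    · intro x; exact Or.inl (L.refl x)
    · intro x y h
      rcases h with h | ⟨h1, h2⟩
      · exact Or.inl (L.symm h)
      · exact Or.inr ⟨h2, h1⟩
    · intro x y z hxy hyz
      rcases hxy with h | ⟨h1, h2⟩ <;> rcases hyz with h' | ⟨h1', h2'⟩
      · exact Or.inl (L.trans h h')
      · exact Or.inr ⟨L.trans h (L.trans h1' (L.symm ((hL x y).mp h))), h2'⟩
      · refine Or.inr ⟨h1, ?_⟩
        have : L y.neg z.neg := (hL y z).mp h'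
        exact L.trans (L.symm h') (L.trans h2 this)
      · exact Or.inr ⟨h1, h2'⟩

theorem glueZero_rel {L : Setoid (PM n)} {hL : IsSigned L} {x y : PM n} :
    (glueZero L hL) x y ↔ (L x y ∨ (L x x.neg ∧ L y y.neg)) := Iff.rfl

theorem mem_Z_of_rel {L : Setoid (PM n)} (hL : IsSigned L) {x y : PM n}
    (h : L x y) (hy : L y y.neg) : L x x.neg :=
  L.trans h (L.trans hy (hL x y |>.mp h |> L.symm))

/-- For a signed setoid, the class of `x` is a zero block iff `K x x.neg`;
in that case `negSet` of the class is itself. -/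
theorem class_zeroBlock {K : Setoid (PM n)} (hK : IsSigned K) {x : PM n}
    (hx : K x x.neg) : IsZeroBlock K {z | K z x} := by
  refine ⟨K.mem_classes x, ?_⟩
  ext w
  constructor
  · rintro ⟨z, hz, rfl⟩
    show K z.neg x
    have : K z.neg x.neg := (hK z x).mp hz
    exact K.trans this (K.symm hx)
  · intro hw
    refine ⟨w.neg, ?_, PM.neg_neg w⟩
    show K w.neg x
    have : K w.neg x.neg := by
      have := (hK w x).mp hw
      exact this
    exact K.trans this (K.symm hx)

theorem least_coarsening (L : Setoid (PM n)) (hL : IsSigned L) :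
    IsLeast {K | IsBPart K ∧ L ≤ K} (glueZero L hL) := by
  set G := glueZero L hL with hG
  have hGsigned : IsSigned G := by
    intro x y
    constructor
    · rintro (h | ⟨h1, h2⟩)
      · exact Or.inl ((hL x y).mp h)
      · exact Or.inr ⟨(hL x x.neg).mp h1, (hL y y.neg).mp h2⟩
    · rintro (h | ⟨h1, h2⟩)
      · refine Or.inl ?_
        have := (hL x.neg y.neg).mp h
        simpa using this
      · refine Or.inr ⟨?_, ?_⟩
        · have := (hL x.neg x.neg.neg).mp h1
          simpa using this
        · have := (hL y.neg y.neg.neg).mp h2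
          simpa using this
  have hclass : ∀ C : Set (PM n), IsZeroBlock G C → C = {x | L x x.neg} := by
    rintro C ⟨⟨a, rfl⟩, hneg⟩
    have ha : L a a.neg := by
      have h1 : a.neg ∈ negSet {x | G x a} := ⟨a, G.refl a, rfl⟩
      rw [hneg] at h1
      rcases (h1 : G a.neg a) with h | ⟨h1', h2'⟩
      · have := (hL a.neg a).mp h
        rw [PM.neg_neg] at this
        exact this
      · exact h2'
    ext x
    constructor
    · rintro (h | ⟨h1, _⟩)
      · exact mem_Z_of_rel hL h ha
      · exact h1
    · intro hx
      exact Or.inr ⟨hx, ha⟩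
  constructor
  · refine ⟨⟨hGsigned, ?_⟩, ?_⟩
    · intro C hC C' hC'
      rw [hclass C hC, hclass C' hC']
    · intro x y h
      exact Or.inl h
  · rintro K ⟨⟨hKs, hKz⟩, hLK⟩
    intro x y h
    rcases h with h | ⟨h1, h2⟩
    · exact hLK h
    · have hx : K x x.neg := hLK h1
      have hy : K y y.neg := hLK h2
      have hzx := class_zeroBlock hKs hx
      have hzy := class_zeroBlock hKs hy
      have heq := hKz hzx hzy
      have : x ∈ {z | K z y} := heq ▸ (K.refl x : x ∈ {z | K z x})
      exact this

end Aux

/-- For every signed partition `L` of `[±n]`, the set of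
`Bₙ`-partitions coarser than `L` has a least element (in the refinement order).
Consequently, for all `Bₙ`-partitions `I, J`, the set of common `Bₙ`-coarsenings of
`I` and `J` has a least element; this least element defines the product `I ·_B J`. -/
theorem exists_least_BPart_coarsening (n : ℕ) (hn : 2 ≤ n) :
    (∀ L : Setoid (PM n), IsSigned L →
        ∃ K₀ : Setoid (PM n), IsLeast {K | IsBPart K ∧ L ≤ K} K₀) ∧
      ∀ I J : Setoid (PM n), IsBPart I → IsBPart J →
        ∃ K₀ : Setoid (PM n), IsLeast {K | IsBPart K ∧ I ≤ K ∧ J ≤ K} K₀ := by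
  constructor
  · intro L hL
    exact ⟨glueZero L hL, least_coarsening L hL⟩
  · intro I J hI hJ
    have hIJ : IsSigned (I ⊔ J) := by
      have key : I ⊔ J ≤ Setoid.comap PM.neg (I ⊔ J) := by
        refine sup_le ?_ ?_
        · intro x y h
          rw [Setoid.comap_rel]
          exact Setoid.le_def.mp le_sup_left ((hI.1 x y).mp h)
        · intro x y h
          rw [Setoid.comap_rel]
          exact Setoid.le_def.mp le_sup_right ((hJ.1 x y).mp h)
      intro x y
      constructor
      · intro h; exact key h
      · intro h
        have := key h
        rw [Setoid.comap_rel] at this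
        simpa using this
    obtain ⟨hmem, hlb⟩ := least_coarsening (I ⊔ J) hIJ
    refine ⟨glueZero (I ⊔ J) hIJ, ⟨hmem.1, le_trans le_sup_left hmem.2,
      le_trans le_sup_right hmem.2⟩, ?_⟩
    rintro K ⟨hB, hIK, hJK⟩
    exact hlb ⟨hB, sup_le hIK hJK⟩
end
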